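/- SIC inference is not complete for disjunction: there exist formulas A, B : ℤ × Unit → Prop (e.g., A (x,_) := x < 0 and B (x,_) := x ≥ 0) such that the only SIC of A w.r.t. x and of B w.r.t. x is (pointwise equivalent to) False, yet True is a SIC (indeed the WIC) of the disjunction fun (x, v) => A (x,v) ∨ B (x,v). -/
import Mathlib

/-- SIC inference is not complete for disjunction. -/
theorem sic_incomplete_disjunction :
    (∀ Ψ : Unit → Prop,
      (∀ v, Ψ v → ∀ x y : ℤ, ((fun p : ℤ × Unit => p.1 < 0) (x, v) ↔
        (fun p : ℤ × Unit => p.1 < 0) (y, v))) → ∀ v, ¬ Ψ v) ∧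
    (∀ Ψ : Unit → Prop,
      (∀ v, Ψ v → ∀ x y : ℤ, ((fun p : ℤ × Unit => p.1 ≥ 0) (x, v) ↔
        (fun p : ℤ × Unit => p.1 ≥ 0) (y, v))) → ∀ v, ¬ Ψ v) ∧
    (∀ v : Unit, (fun _ : Unit => True) v →
      ∀ x y : ℤ, ((fun p : ℤ × Unit => p.1 < 0 ∨ p.1 ≥ 0) (x, v) ↔
        (fun p : ℤ × Unit => p.1 < 0 ∨ p.1 ≥ 0) (y, v))) := by
  refine ⟨?_, ?_, ?_⟩
  · intro Ψ h v hv
    have := (h v hv (-1) 0).mp (by norm_num)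
    omega
  · intro Ψ h v hv
    have := (h v hv 0 (-1)).mp (by norm_num)
    omega
  · intro v _ x y
    constructor <;> intro _ <;> omega
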